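/- Let x¹ = ⋯ = x^{n/2} = −λ/n and x^{n/2+1} = ⋯ = xⁿ = λ/n in ℝ (with n even, 0 < λ, n ≥ 8λ), let β ∈ ℝⁿ have βᵢ = −1 for i ≤ n/2 and βᵢ = 1 for i > n/2, and let K̃ be the random-binning kernel matrix with bucket function rect and width density p(w) = we^{-w}. Then βᵀK̃β takes values in {0, n²/2}, and Pr[βᵀK̃β = n²/2] = 1 − e^{-2λ/n} ≤ 2λ/n. -/

import Mathlib

open MeasureTheory Matrix Real

open MeasureTheory Matrix Real

lemma aux_sum_beta (n h : ℕ) (hn : n = h + h) (β : Fin n → ℝ)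
    (hβ : ∀ i : Fin n, β i = if (i : ℕ) < h then -1 else 1) :
    ∑ i, β i = 0 := by
  have e1 : ∑ i, β i = ∑ i ∈ Finset.range n, (if i < h then (-1:ℝ) else 1) := by
    rw [← Fin.sum_univ_eq_sum_range]
    exact Finset.sum_congr rfl fun i _ => by rw [hβ]
  rw [e1, Finset.range_eq_Ico, ← Finset.sum_Ico_consecutive _ (Nat.zero_le h) (by omega : h ≤ n)]
  have e2 : ∑ i ∈ Finset.Ico 0 h, (if i < h then (-1:ℝ) else 1) = -(h:ℝ) := by
    rw [Finset.sum_congr rfl (fun i hi => if_pos (Finset.mem_Ico.mp hi).2)]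
    simp
  have e3 : ∑ i ∈ Finset.Ico h n, (if i < h then (-1:ℝ) else 1) = (h:ℝ) := by
    rw [Finset.sum_congr rfl (fun i hi => if_neg (by
      have := (Finset.mem_Ico.mp hi).1; omega))]
    simp [hn]
  rw [e2, e3]; ring

lemma aux_quad (n h : ℕ) (hn : n = h + h) (β : Fin n → ℝ)
    (hβ : ∀ i : Fin n, β i = if (i : ℕ) < h then -1 else 1)
    (K : Matrix (Fin n) (Fin n) ℝ) (ra rb : ℤ)
    (hK : ∀ i j, K i j = if (if (i:ℕ) < h then ra else rb) = (if (j:ℕ) < h then ra else rb)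
      then 1 else 0) :
    β ⬝ᵥ K.mulVec β = if ra = rb then 0 else (n:ℝ)^2/2 := by
  have hsum : ∑ i, β i = 0 := aux_sum_beta n h hn β hβ
  have hQ : β ⬝ᵥ K.mulVec β = ∑ i, ∑ j, β i * (K i j * β j) := by
    simp [dotProduct, mulVec, Finset.mul_sum]
  by_cases hr : ra = rb
  · rw [if_pos hr, hQ]
    have : ∀ i j : Fin n, β i * (K i j * β j) = β i * β j := by
      intro i j; rw [hK]; subst hr; simp
    rw [Finset.sum_congr rfl fun i _ => Finset.sum_congr rfl fun j _ => this i j,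
      ← Finset.sum_mul_sum, hsum]
    ring
  · rw [if_neg hr, hQ]
    have key : ∀ i j : Fin n, β i * (K i j * β j) = 1/2 + (β i * β j)/2 := by
      intro i j
      rw [hK, hβ i, hβ j]
      by_cases hi : (i:ℕ) < h <;> by_cases hj : (j:ℕ) < h <;>
        simp [hi, hj, hr, Ne.symm hr] <;> ring
    rw [Finset.sum_congr rfl fun i _ => Finset.sum_congr rfl fun j _ => key i j]
    have hrow : ∀ i : Fin n, ∑ j : Fin n, (1/2 + (β i * β j)/2) = (n:ℝ)/2 := by
      intro i
      rw [Finset.sum_add_distrib]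
      have : ∑ j : Fin n, β i * β j / 2 = β i * (∑ j, β j) / 2 := by
        rw [Finset.mul_sum, Finset.sum_div]
      rw [this, hsum]
      simp
      ring
    rw [Finset.sum_congr rfl fun i _ => hrow i]
    simp
    ring

lemma round_ne_iff (u v : ℝ) (huv : u ≤ v) :
    round u ≠ round v ↔ ∃ k : ℤ, u + 1/2 < (k:ℝ) ∧ (k:ℝ) ≤ v + 1/2 := by
  rw [round_eq, round_eq]
  constructor
  · intro hne
    have hle : ⌊u + 1/2⌋ ≤ ⌊v + 1/2⌋ := Int.floor_le_floor (by linarith)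
    have hlt : ⌊u + 1/2⌋ < ⌊v + 1/2⌋ := lt_of_le_of_ne hle hne
    exact ⟨⌊v + 1/2⌋, Int.floor_lt.mp hlt, Int.floor_le _⟩
  · rintro ⟨k, h1, h2⟩
    have ha : ⌊u + 1/2⌋ < k := Int.floor_lt.mpr h1
    have hb : k ≤ ⌊v + 1/2⌋ := Int.le_floor.mpr h2
    omega

lemma measure_bad (b w : ℝ) (hb : 0 < b) (hw : 0 < w) :
    volume {z ∈ Set.Icc (0:ℝ) w | round ((-b - z)/w) ≠ round ((b - z)/w)} =
      ENNReal.ofReal (min w (2*b)) := by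
  have hmono : ∀ z : ℝ, (-b - z)/w ≤ (b - z)/w := fun z =>
    (div_le_div_iff_of_pos_right hw).mpr (by linarith)
  have hA : ∀ (z : ℝ) (k : ℤ), ((-b - z)/w + 1/2 < (k:ℝ)) ↔ (w/2 - b - k*w < z) := by
    intro z k
    rw [show ((-b - z)/w + 1/2 < (k:ℝ)) ↔ ((-b - z)/w < (k:ℝ) - 1/2) from
      ⟨fun h => by linarith, fun h => by linarith⟩, div_lt_iff₀ hw]
    constructor <;> intro h <;> nlinarith
  have hB : ∀ (z : ℝ) (k : ℤ), ((k:ℝ) ≤ (b - z)/w + 1/2) ↔ (z ≤ b + w/2 - k*w) := by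
    intro z k
    rw [show ((k:ℝ) ≤ (b - z)/w + 1/2) ↔ ((k:ℝ) - 1/2 ≤ (b - z)/w) from
      ⟨fun h => by linarith, fun h => by linarith⟩, le_div_iff₀ hw]
    constructor <;> intro h <;> nlinarith
  rcases le_total w (2*b) with hwc | hcw
  · have hset : {z ∈ Set.Icc (0:ℝ) w | round ((-b - z)/w) ≠ round ((b - z)/w)} =
        Set.Icc (0:ℝ) w := by
      apply Set.eq_of_subset_of_subset (fun z hz => hz.1)
      intro z hz
      refine ⟨hz, (round_ne_iff _ _ (hmono z)).mpr ⟨⌊(-b - z)/w + 1/2⌋ + 1, ?_, ?_⟩⟩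
      · push_cast
        exact Int.lt_floor_add_one _
      · have h1 : (⌊(-b - z)/w + 1/2⌋ : ℝ) ≤ (-b - z)/w + 1/2 := Int.floor_le _
        have h2 : (1:ℝ) ≤ 2*b/w := (one_le_div hw).mpr hwc
        have h3 : (b - z)/w - (-b - z)/w = 2*b/w := by ring
        push_cast
        linarith
    rw [hset, Real.volume_Icc, min_eq_left hwc, sub_zero]
  · have hlo : 0 ≤ w/2 - b := by linarith
    have hhi : b + w/2 ≤ w := by linarith
    have hsub1 : Set.Ioc (w/2 - b) (b + w/2) ⊆
        {z ∈ Set.Icc (0:ℝ) w | round ((-b - z)/w) ≠ round ((b - z)/w)} := by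
      rintro z ⟨hz1, hz2⟩
      refine ⟨⟨by linarith, by linarith⟩, (round_ne_iff _ _ (hmono z)).mpr ⟨0, ?_, ?_⟩⟩
      · rw [hA]; push_cast; linarith
      · rw [hB]; push_cast; linarith
    have hsub2 : {z ∈ Set.Icc (0:ℝ) w | round ((-b - z)/w) ≠ round ((b - z)/w)} ⊆
        {0} ∪ Set.Ioc (w/2 - b) (b + w/2) := by
      rintro z ⟨⟨hz0, hzw⟩, hne⟩
      obtain ⟨k, h1, h2⟩ := (round_ne_iff _ _ (hmono z)).mp hne
      rw [hA] at h1
      rw [hB] at h2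
      have hk1 : (k:ℝ) ≤ 1 := by
        have : (k:ℝ)*w ≤ 1*w := by linarith
        exact le_of_mul_le_mul_right this hw
      have hk0 : (-1:ℝ) < (k:ℝ) := by
        have : (-1:ℝ)*w < (k:ℝ)*w := by linarith
        exact lt_of_mul_lt_mul_right this hw.le
      have hk : k = 0 ∨ k = 1 := by
        have a1 : k ≤ 1 := by exact_mod_cast hk1
        have a2 : -1 < k := by exact_mod_cast hk0
        omega
      rcases hk with rfl | rfl
      · right
        push_cast at h1 h2
        exact ⟨by linarith, by linarith⟩
      · left
        push_cast at h1 h2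
        have : z ≤ 0 := by linarith
        simp [le_antisymm this hz0]
    apply le_antisymm
    · calc volume {z ∈ Set.Icc (0:ℝ) w | round ((-b - z)/w) ≠ round ((b - z)/w)}
          ≤ volume ({(0:ℝ)} ∪ Set.Ioc (w/2 - b) (b + w/2)) := measure_mono hsub2
        _ ≤ volume ({(0:ℝ)} : Set ℝ) + volume (Set.Ioc (w/2 - b) (b + w/2)) :=
            measure_union_le _ _
        _ = ENNReal.ofReal (min w (2*b)) := by
            rw [Real.volume_singleton, Real.volume_Ioc, zero_add, min_eq_right hcw]
            congr 1
            ring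
    · calc ENNReal.ofReal (min w (2*b)) = volume (Set.Ioc (w/2 - b) (b + w/2)) := by
            rw [Real.volume_Ioc, min_eq_right hcw]; congr 1; ring
        _ ≤ _ := measure_mono hsub1

lemma integral_part (c : ℝ) (hc : 0 < c) :
    ∫ w in Set.Ioi (0:ℝ), Real.exp (-w) * min w c = 1 - Real.exp (-c) := by
  have hcont : Continuous fun w : ℝ => Real.exp (-w) * min w c :=
    (Real.continuous_exp.comp continuous_neg).mul (continuous_id.min continuous_const)
  have hi1 : IntegrableOn (fun w : ℝ => Real.exp (-w) * min w c) (Set.Ioc 0 c) volume :=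
    hcont.integrableOn_Ioc
  have hexp : IntegrableOn (fun w : ℝ => Real.exp (-w)) (Set.Ioi c) volume := by
    have := exp_neg_integrableOn_Ioi c (b := 1) one_pos
    simpa using this
  have hi2 : IntegrableOn (fun w : ℝ => Real.exp (-w) * min w c) (Set.Ioi c) volume := by
    apply IntegrableOn.congr_fun (hexp.mul_const c) _ measurableSet_Ioi
    intro w hw
    simp [min_eq_right (le_of_lt (Set.mem_Ioi.mp hw))]
  rw [← Set.Ioc_union_Ioi_eq_Ioi hc.le,
    setIntegral_union (Set.Ioc_disjoint_Ioi le_rfl) measurableSet_Ioi hi1 hi2]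
  have e1 : ∫ w in Set.Ioc (0:ℝ) c, Real.exp (-w) * min w c
      = ∫ w in Set.Ioc (0:ℝ) c, Real.exp (-w) * w := by
    apply setIntegral_congr_fun measurableSet_Ioc
    intro w hw
    simp [min_eq_left hw.2]
  have e2 : ∫ w in Set.Ioi c, Real.exp (-w) * min w c
      = ∫ w in Set.Ioi c, Real.exp (-w) * c := by
    apply setIntegral_congr_fun measurableSet_Ioi
    intro w hw
    simp [min_eq_right (le_of_lt (Set.mem_Ioi.mp hw))]
  have e3 : ∫ w in Set.Ioc (0:ℝ) c, Real.exp (-w) * w = 1 - Real.exp (-c) - c * Real.exp (-c) := by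
    have hderiv : ∀ t ∈ Set.uIcc (0:ℝ) c,
        HasDerivAt (fun t : ℝ => -(t+1) * Real.exp (-t)) (Real.exp (-t) * t) t := by
      intro t _
      have h1 : HasDerivAt (fun t : ℝ => Real.exp (-t)) (-Real.exp (-t)) t := by
        simpa using (hasDerivAt_neg t).exp
      have h2 : HasDerivAt (fun t : ℝ => -(t+1)) (-1) t := ((hasDerivAt_id t).add_const 1).neg
      have : HasDerivAt (fun t : ℝ => -(t+1) * Real.exp (-t))
          (-1 * Real.exp (-t) + -(t+1) * -Real.exp (-t)) t := h2.mul h1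
      convert this using 1
      ring
    have hint : IntervalIntegrable (fun w : ℝ => Real.exp (-w) * w) volume 0 c :=
      ((Real.continuous_exp.comp continuous_neg).mul continuous_id).intervalIntegrable 0 c
    have := intervalIntegral.integral_eq_sub_of_hasDerivAt hderiv hint
    rw [intervalIntegral.integral_of_le hc.le] at this
    rw [this]
    simp [Real.exp_zero]
    ring
  have e4 : ∫ w in Set.Ioi c, Real.exp (-w) * c = c * Real.exp (-c) := by
    rw [MeasureTheory.integral_mul_const, integral_exp_neg_Ioi]
    ring
  rw [e1, e2, e3, e4]
  ring


/-- Lower-bound construction: two clusters of `n/2` points at `±λ/n` with signs `∓1`.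
The random-binning quadratic form `βᵀK̃β` takes only the values `0` and `n²/2`, and
the probability (over `w` with density `we^{-w}` and `z ~ Uniform[0,w]`) that it equals
`n²/2` is `1 − e^{-2λ/n} ≤ 2λ/n`. -/
theorem lower_bound_quadratic_form_distribution
    (n : ℕ) (hn_even : Even n) (hn_pos : 0 < n) (lam : ℝ) (hlam : 0 < lam)
    (hn_lam : 8 * lam ≤ (n : ℝ))
    (x : Fin n → ℝ)
    (hx : ∀ i : Fin n, x i = if (i : ℕ) < n / 2 then -(lam / n) else lam / n)
    (β : Fin n → ℝ)
    (hβ : ∀ i : Fin n, β i = if (i : ℕ) < n / 2 then -1 else 1)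
    (Ktil : ℝ → ℝ → Matrix (Fin n) (Fin n) ℝ)
    (hKtil : ∀ w z i j, Ktil w z i j =
      if round ((x i - z) / w) = round ((x j - z) / w) then 1 else 0) :
    (∀ w z : ℝ, 0 < w → z ∈ Set.Icc 0 w →
        β ⬝ᵥ (Ktil w z).mulVec β = 0 ∨ β ⬝ᵥ (Ktil w z).mulVec β = (n : ℝ)^2 / 2) ∧
    (∫ w in Set.Ioi (0 : ℝ), w * Real.exp (-w) *
        ((volume {z ∈ Set.Icc (0 : ℝ) w |
            β ⬝ᵥ ((Ktil w z).mulVec β) = (n : ℝ)^2 / 2}).toReal / w)) =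
      1 - Real.exp (-2 * lam / n) ∧
    1 - Real.exp (-2 * lam / n) ≤ 2 * lam / n := by
  obtain ⟨m, hm⟩ := hn_even
  have hn2 : n = n / 2 + n / 2 := by omega
  have hnR : (0:ℝ) < n := Nat.cast_pos.mpr hn_pos
  have hb : 0 < lam / (n:ℝ) := div_pos hlam hnR
  have hne : ((n:ℝ)^2/2) ≠ 0 := by positivity
  have hquad : ∀ w z : ℝ, β ⬝ᵥ (Ktil w z).mulVec β =
      if round ((-(lam/(n:ℝ)) - z)/w) = round ((lam/(n:ℝ) - z)/w) then 0 else (n:ℝ)^2/2 := by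
    intro w z
    apply aux_quad n (n/2) hn2 β hβ
    have hxr : ∀ i : Fin n, round ((x i - z)/w) =
        if (i:ℕ) < n/2 then round ((-(lam/(n:ℝ)) - z)/w) else round ((lam/(n:ℝ) - z)/w) := by
      intro i
      rw [hx i]
      split_ifs <;> norm_num
    intro i j
    rw [hKtil, hxr, hxr]
  have hiff : ∀ w z : ℝ, (β ⬝ᵥ (Ktil w z).mulVec β = (n:ℝ)^2/2) ↔
      round ((-(lam/(n:ℝ)) - z)/w) ≠ round ((lam/(n:ℝ) - z)/w) := by
    intro w z
    rw [hquad w z]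
    split_ifs with hcase
    · exact ⟨fun h0 => absurd h0.symm hne, fun hk => absurd hcase hk⟩
    · exact ⟨fun _ => hcase, fun _ => rfl⟩
  refine ⟨?_, ?_, ?_⟩
  · intro w z _ _
    rw [hquad w z]
    split_ifs
    · exact Or.inl rfl
    · exact Or.inr rfl
  · have key : (∫ w in Set.Ioi (0 : ℝ), w * Real.exp (-w) *
        ((volume {z ∈ Set.Icc (0 : ℝ) w |
            β ⬝ᵥ ((Ktil w z).mulVec β) = (n : ℝ)^2 / 2}).toReal / w)) =
        ∫ w in Set.Ioi (0:ℝ), Real.exp (-w) * min w (2*(lam/(n:ℝ))) := by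
      apply setIntegral_congr_fun measurableSet_Ioi
      intro w hw
      have hw' : 0 < w := hw
      have hsetEq : {z ∈ Set.Icc (0:ℝ) w | β ⬝ᵥ ((Ktil w z).mulVec β) = (n:ℝ)^2/2} =
          {z ∈ Set.Icc (0:ℝ) w |
            round ((-(lam/(n:ℝ)) - z)/w) ≠ round ((lam/(n:ℝ) - z)/w)} := by
        ext z
        simp only [Set.mem_setOf_eq]
        exact and_congr_right fun _ => hiff w z
      have hvol := measure_bad (lam/(n:ℝ)) w hb hw'
      simp only []
      rw [hsetEq, hvol, ENNReal.toReal_ofReal (le_min hw'.le (by positivity))]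
      field_simp
    rw [key, integral_part (2*(lam/(n:ℝ))) (by positivity),
      show (-2 * lam / (n:ℝ)) = -(2*(lam/(n:ℝ))) by ring]
  · have h1 := Real.add_one_le_exp (-2 * lam / (n:ℝ))
    have h2 : -2 * lam / (n:ℝ) = -(2 * lam / (n:ℝ)) := by ring
    linarith
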